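/- For σ, τ > -1/2 there exist positive constants c₁, c₂, c₃, b₀ such that for all λ ≥ 0, β > 0 and b ∈ [0,b₀]: N_{σ,τ}(β,λ) ≤ λ²/2 - c₁ b ((1+β)/√β) λ + c₂ b² ((1+β²)/β) + c₃(λ+1), where N_{σ,τ}(β,λ) = #{(k₁,k₂) ∈ ℕ²: (k₁+σ)√β + (k₂+τ)/√β ≤ λ}. -/

import Mathlib

private lemma gauss_sum (n : ℕ) : ∑ j ∈ Finset.range n, (j : ℝ) = n * (n - 1) / 2 := by
  induction n with
  | zero => simp
  | succ n ih =>
    rw [Finset.sum_range_succ, ih]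
    push_cast
    ring

private lemma count_le (σ τ lam r : ℝ) (hr : 0 < r) :
    (Set.ncard {k : ℕ × ℕ | ((k.1 : ℝ) + 1 + σ) * r + ((k.2 : ℝ) + 1 + τ) / r ≤ lam} : ℝ)
      ≤ (lam * r - (1 + σ) * r ^ 2 - τ + r ^ 2 / 2) ^ 2 / (2 * r ^ 2) := by
  set S := {k : ℕ × ℕ | ((k.1 : ℝ) + 1 + σ) * r + ((k.2 : ℝ) + 1 + τ) / r ≤ lam} with hS
  set t := lam * r - (1 + σ) * r ^ 2 - τ with ht
  have hβ : (0:ℝ) < r ^ 2 := by positivity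
  have hmem : ∀ k : ℕ × ℕ, k ∈ S → (k.2 : ℝ) + 1 ≤ t - (k.1 : ℝ) * r ^ 2 := by
    intro k hk
    simp only [hS, Set.mem_setOf_eq] at hk
    have h1 : ((k.2 : ℝ) + 1 + τ) / r ≤ lam - ((k.1 : ℝ) + 1 + σ) * r := by linarith
    have h2 : ((k.2 : ℝ) + 1 + τ) ≤ (lam - ((k.1 : ℝ) + 1 + σ) * r) * r := (div_le_iff₀ hr).mp h1
    nlinarith [h2]
  by_cases hT : t < 1
  · have hempty : S = ∅ := by
      ext k
      simp only [Set.mem_empty_iff_false, iff_false]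
      intro hk
      have h1 := hmem k hk
      have h2 : (0:ℝ) ≤ (k.1 : ℝ) * r ^ 2 := by positivity
      have h3 : (0:ℝ) ≤ (k.2 : ℝ) := Nat.cast_nonneg _
      linarith
    rw [hempty, Set.ncard_empty]
    simp only [Nat.cast_zero]
    positivity
  · push_neg at hT
    set J := ⌊t / r ^ 2⌋₊ + 1 with hJ
    set K := ⌊t⌋₊ with hK
    have hJmem : ∀ k : ℕ × ℕ, k ∈ S → k.1 < J := by
      intro k hk
      have h1 := hmem k hk
      have h2 : (0:ℝ) ≤ (k.2 : ℝ) := Nat.cast_nonneg _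
      have h3 : (k.1 : ℝ) * r ^ 2 ≤ t := by linarith
      have h4 : (k.1 : ℝ) ≤ t / r ^ 2 := (le_div_iff₀ hβ).mpr h3
      have h5 : k.1 ≤ ⌊t / r ^ 2⌋₊ := Nat.le_floor h4
      omega
    have hKmem : ∀ k : ℕ × ℕ, k ∈ S → k.2 < K := by
      intro k hk
      have h1 := hmem k hk
      have h2 : (0:ℝ) ≤ (k.1 : ℝ) * r ^ 2 := by positivity
      have h3 : ((k.2 + 1 : ℕ) : ℝ) ≤ t := by push_cast; linarith
      have h4 : k.2 + 1 ≤ K := Nat.le_floor h3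
      omega
    have hsub : S ⊆ ↑(Finset.range J ×ˢ Finset.range K) := by
      intro k hk
      simp only [Finset.coe_product, Set.mem_prod, Finset.mem_coe, Finset.mem_range]
      exact ⟨hJmem k hk, hKmem k hk⟩
    have hfin : S.Finite := Set.Finite.subset (Finset.range J ×ˢ Finset.range K).finite_toSet hsub
    rw [Set.ncard_eq_toFinset_card S hfin]
    set F := hfin.toFinset with hF
    have hF1 : ∀ p ∈ F, p.1 ∈ Finset.range J := by
      intro p hp
      rw [hF, Set.Finite.mem_toFinset] at hp
      exact Finset.mem_range.mpr (hJmem p hp)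
    have hcard : F.card = ∑ j ∈ Finset.range J, (F.filter fun p => p.1 = j).card :=
      Finset.card_eq_sum_card_fiberwise hF1
    have hfiber : ∀ j ∈ Finset.range J,
        ((F.filter fun p => p.1 = j).card : ℝ) ≤ t - (j : ℝ) * r ^ 2 := by
      intro j hj
      have hjle : (j : ℝ) * r ^ 2 ≤ t := by
        have h1 : j ≤ ⌊t / r ^ 2⌋₊ := by
          have := Finset.mem_range.mp hj
          omega
        have h2 : (j : ℝ) ≤ t / r ^ 2 := le_trans (Nat.cast_le.mpr h1)
          (Nat.floor_le (by positivity))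
        exact (le_div_iff₀ hβ).mp h2
      have hnn : (0:ℝ) ≤ t - (j : ℝ) * r ^ 2 := by linarith
      have hle : (F.filter fun p => p.1 = j).card ≤ ⌊t - (j : ℝ) * r ^ 2⌋₊ := by
        rw [← Finset.card_range ⌊t - (j : ℝ) * r ^ 2⌋₊]
        apply Finset.card_le_card_of_injOn Prod.snd
        · intro p hp
          rw [Finset.mem_coe, Finset.mem_filter, hF, Set.Finite.mem_toFinset] at hp
          obtain ⟨hpS, hpj⟩ := hp
          have h1 := hmem p hpS
          rw [hpj] at h1
          have h2 : p.2 + 1 ≤ ⌊t - (j : ℝ) * r ^ 2⌋₊ :=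
            Nat.le_floor (by push_cast; linarith)
          exact Finset.mem_range.mpr (by omega)
        · intro p hp q hq hpq
          simp only [Finset.coe_filter, Set.mem_setOf_eq] at hp hq
          exact Prod.ext (hp.2.trans hq.2.symm) hpq
      calc ((F.filter fun p => p.1 = j).card : ℝ)
          ≤ (⌊t - (j : ℝ) * r ^ 2⌋₊ : ℝ) := Nat.cast_le.mpr hle
        _ ≤ t - (j : ℝ) * r ^ 2 := Nat.floor_le hnn
    have hsum2 : ∀ n : ℕ, ∑ j ∈ Finset.range n, (t - (j : ℝ) * r ^ 2)
        = (n : ℝ) * t - r ^ 2 * ((n : ℝ) * ((n : ℝ) - 1) / 2) := by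
      intro n
      rw [Finset.sum_sub_distrib, Finset.sum_const, Finset.card_range,
        ← Finset.sum_mul, gauss_sum]
      ring
    have hsum : (F.card : ℝ) ≤ (J : ℝ) * t - r ^ 2 * ((J : ℝ) * ((J : ℝ) - 1) / 2) := by
      rw [hcard, Nat.cast_sum]
      exact le_trans (Finset.sum_le_sum hfiber) (le_of_eq (hsum2 J))
    have hfinal : (J : ℝ) * t - r ^ 2 * ((J : ℝ) * ((J : ℝ) - 1) / 2)
        ≤ (t + r ^ 2 / 2) ^ 2 / (2 * r ^ 2) := by
      rw [le_div_iff₀ (by positivity)]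
      nlinarith [sq_nonneg (t + r ^ 2 / 2 - r ^ 2 * (J : ℝ))]
    have hgoal : (lam * r - (1 + σ) * r ^ 2 - τ + r ^ 2 / 2) = t + r ^ 2 / 2 := by rw [ht]
    rw [hgoal]
    exact le_trans hsum hfinal

set_option maxHeartbeats 1000000 in
private lemma main_bound (σ τ lam r b c₁ c₂ : ℝ) (hσ : -1/2 < σ) (hτ : -1/2 < τ)
    (hr : 1 ≤ r) (hlam : 0 ≤ lam) (hb0 : 0 ≤ b) (hb1 : b ≤ 1)
    (hc₁ : 0 < c₁) (hc₁σ : 8 * c₁ ≤ σ + 1/2) (hc₂ : c₁ ^ 2 ≤ c₂) :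
    (Set.ncard {k : ℕ × ℕ | ((k.1 : ℝ) + 1 + σ) * r + ((k.2 : ℝ) + 1 + τ) / r ≤ lam} : ℝ)
      ≤ lam ^ 2 / 2 - c₁ * b * ((1 + r ^ 2) / r) * lam
        + c₂ * b ^ 2 * ((1 + (r ^ 2) ^ 2) / r ^ 2) + (lam + 1) := by
  have hr0 : (0:ℝ) < r := lt_of_lt_of_le one_pos hr
  have hr2 : (0:ℝ) < r ^ 2 := by positivity
  set A := (1 + r ^ 2) / r with hA
  set B := (1 + (r ^ 2) ^ 2) / r ^ 2 with hB
  have hA0 : (0:ℝ) ≤ A := by positivity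
  have hB0 : (0:ℝ) ≤ B := by positivity
  have eA : A * r = 1 + r ^ 2 := by rw [hA]; field_simp
  have eB : B * r ^ 2 = 1 + (r ^ 2) ^ 2 := by rw [hB]; field_simp
  have hA2B : A ^ 2 ≤ 2 * B := by
    refine le_of_mul_le_mul_right ?_ hr2
    calc A ^ 2 * r ^ 2 = (A * r) ^ 2 := by ring
      _ = (1 + r ^ 2) ^ 2 := by rw [eA]
      _ ≤ 2 * (1 + (r ^ 2) ^ 2) := by nlinarith [sq_nonneg (1 - r ^ 2)]
      _ = 2 * B * r ^ 2 := by rw [← eB]; ring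
  have hA2r : A ≤ 2 * r := by
    rw [hA, div_le_iff₀ hr0]
    nlinarith [hr]
  clear_value A B
  by_cases hls : lam < (1 + σ) * r + (1 + τ) / r
  · have hempty : {k : ℕ × ℕ | ((k.1 : ℝ) + 1 + σ) * r + ((k.2 : ℝ) + 1 + τ) / r ≤ lam} = ∅ := by
      ext k
      simp only [Set.mem_setOf_eq, Set.mem_empty_iff_false, iff_false]
      intro h
      have h1 : (1 + σ) * r ≤ ((k.1 : ℝ) + 1 + σ) * r :=
        mul_le_mul_of_nonneg_right (by linarith [Nat.cast_nonneg (α := ℝ) k.1]) hr0.le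
      have h2 : (1 + τ) / r ≤ ((k.2 : ℝ) + 1 + τ) / r :=
        (div_le_div_iff_of_pos_right hr0).mpr (by linarith [Nat.cast_nonneg (α := ℝ) k.2])
      linarith
    rw [hempty, Set.ncard_empty]
    simp only [Nat.cast_zero]
    have h1 : c₁ * b * A * lam ≤ lam ^ 2 / 2 + (c₁ * b * A) ^ 2 / 2 := by
      nlinarith [sq_nonneg (lam - c₁ * b * A)]
    have h2 : (c₁ * b * A) ^ 2 / 2 ≤ c₂ * b ^ 2 * B := by
      nlinarith [mul_le_mul_of_nonneg_left hA2B (by positivity : (0:ℝ) ≤ c₁ ^ 2 * b ^ 2),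
        mul_le_mul_of_nonneg_right hc₂ (mul_nonneg (sq_nonneg b) hB0)]
    linarith
  · push_neg at hls
    have hcount := count_le σ τ lam r hr0
    set sh := (1/2 + σ) * r + τ / r with hsh
    clear_value sh
    have hfac : lam * r - (1 + σ) * r ^ 2 - τ + r ^ 2 / 2 = (lam - sh) * r := by
      rw [hsh]
      field_simp
      ring
    have hconv : (lam * r - (1 + σ) * r ^ 2 - τ + r ^ 2 / 2) ^ 2 / (2 * r ^ 2)
        = (lam - sh) ^ 2 / 2 := by
      rw [hfac, mul_pow]
      rw [mul_comm (2:ℝ) (r ^ 2), ← div_div, mul_div_assoc]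
      rw [div_self (by positivity : (r:ℝ) ^ 2 ≠ 0), mul_one]
    have hτr : -(1/2 : ℝ) ≤ τ / r := by
      rw [le_div_iff₀ hr0]
      linarith
    have h1τr : (0:ℝ) ≤ (1 + τ) / r := div_nonneg (by linarith) hr0.le
    set a := σ + 1/2 with ha
    clear_value a
    have ha0 : (0:ℝ) < a := by rw [ha]; linarith
    set u := a * r - 1/2 with hu
    clear_value u
    have hu_le : u ≤ sh := by
      rw [hu, hsh, ha]
      linarith
    have hsh_le : sh ≤ lam := by
      have hh : sh ≤ (1 + σ) * r + (1 + τ) / r := by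
        rw [hsh]
        have : τ / r ≤ (1 + τ) / r := (div_le_div_iff_of_pos_right hr0).mpr (by linarith)
        nlinarith [hr0]
      linarith
    have hulam : u ≤ lam := le_trans hu_le hsh_le
    have hslam : (a + 1/2) * r ≤ lam := by
      have he : (a + 1/2) * r = (1 + σ) * r := by rw [ha]; ring
      linarith [hls, h1τr, he]
    have k1 : c₁ * b * A * lam ≤ (a / 4) * r * lam := by
      have h1 : c₁ * b * A ≤ (a / 4) * r := by
        nlinarith [mul_nonneg (sub_nonneg.2 hA2r) (mul_nonneg hc₁.le hb0),
          mul_nonneg (sub_nonneg.2 hb1) (mul_nonneg hc₁.le hr0.le),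
          mul_nonneg (by linarith : (0:ℝ) ≤ a - 8 * c₁) hr0.le]
      exact mul_le_mul_of_nonneg_right h1 hlam
    have k2 : (a / 4) * r * lam ≤ u * lam - u ^ 2 / 2 + (lam + 1) := by
      rw [hu]
      nlinarith [mul_nonneg (by positivity : (0:ℝ) ≤ 3 * a / 4 * r + 1/2)
          (sub_nonneg.2 hslam),
        mul_nonneg (mul_nonneg ha0.le ha0.le) (sq_nonneg r),
        mul_nonneg ha0.le hr0.le, hr, hr0.le, hlam]
    have k3 : u * lam - u ^ 2 / 2 ≤ sh * lam - sh ^ 2 / 2 := by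
      nlinarith [mul_nonneg (sub_nonneg.2 hu_le) (by linarith : (0:ℝ) ≤ 2 * lam - sh - u)]
    have hb2B : (0:ℝ) ≤ c₂ * b ^ 2 * B :=
      mul_nonneg (mul_nonneg (le_trans (sq_nonneg c₁) hc₂) (sq_nonneg b)) hB0
    calc (Set.ncard {k : ℕ × ℕ | ((k.1 : ℝ) + 1 + σ) * r + ((k.2 : ℝ) + 1 + τ) / r ≤ lam} : ℝ)
        ≤ (lam - sh) ^ 2 / 2 := by rw [← hconv]; exact hcount
      _ ≤ lam ^ 2 / 2 - c₁ * b * A * lam + c₂ * b ^ 2 * B + (lam + 1) := by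
          nlinarith [k1, k2, k3, hb2B]

theorem stmt_14 (σ τ : ℝ) (hσ : σ > -1/2) (hτ : τ > -1/2) :
    ∃ c₁ c₂ c₃ b₀ : ℝ, 0 < c₁ ∧ 0 < c₂ ∧ 0 < c₃ ∧ 0 < b₀ ∧
      ∀ lam β b : ℝ, 0 ≤ lam → 0 < β → b ∈ Set.Icc 0 b₀ →
        (Set.ncard {k : ℕ × ℕ |
            ((k.1 : ℝ) + 1 + σ) * Real.sqrt β + ((k.2 : ℝ) + 1 + τ) / Real.sqrt β ≤ lam} : ℝ)
          ≤ lam ^ 2 / 2 - c₁ * b * ((1 + β) / Real.sqrt β) * lam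
            + c₂ * b ^ 2 * ((1 + β ^ 2) / β) + c₃ * (lam + 1) := by
  set δ := min (σ + 1/2) (τ + 1/2) with hδ
  have hδ0 : 0 < δ := lt_min (by linarith) (by linarith)
  refine ⟨δ/8, (δ/8)^2 + 1, 1, 1, by positivity, by positivity, one_pos, one_pos, ?_⟩
  intro lam β b hlam hβpos hb
  obtain ⟨hb0, hb1⟩ := hb
  set r := Real.sqrt β with hrdef
  have hr0 : 0 < r := Real.sqrt_pos.mpr hβpos
  have hβr : r ^ 2 = β := Real.sq_sqrt hβpos.le
  rw [← hβr, one_mul]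
  have hc₁ : 0 < δ/8 := by positivity
  have hc₂ : (δ/8) ^ 2 ≤ (δ/8) ^ 2 + 1 := by linarith
  by_cases hr1 : 1 ≤ r
  · have hc₁σ : 8 * (δ/8) ≤ σ + 1/2 := by
      have := min_le_left (σ + 1/2) (τ + 1/2)
      rw [← hδ] at this
      linarith
    exact main_bound σ τ lam r b (δ/8) ((δ/8)^2 + 1) hσ hτ hr1 hlam hb0 hb1 hc₁ hc₁σ hc₂
  · push_neg at hr1
    have hr1' : 1 ≤ 1/r := by
      rw [le_div_iff₀ hr0]
      linarith
    have hc₁τ : 8 * (δ/8) ≤ τ + 1/2 := by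
      have := min_le_right (σ + 1/2) (τ + 1/2)
      rw [← hδ] at this
      linarith
    have hswap : {k : ℕ × ℕ | ((k.1 : ℝ) + 1 + σ) * r + ((k.2 : ℝ) + 1 + τ) / r ≤ lam}
        = Prod.swap '' {k : ℕ × ℕ |
            ((k.1 : ℝ) + 1 + τ) * (1/r) + ((k.2 : ℝ) + 1 + σ) / (1/r) ≤ lam} := by
      rw [Set.image_swap_eq_preimage_swap]
      ext k
      simp only [Set.mem_preimage, Set.mem_setOf_eq, Prod.fst_swap, Prod.snd_swap]
      have e1 : ((k.2 : ℝ) + 1 + τ) * (1/r) = ((k.2 : ℝ) + 1 + τ) / r := by ring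
      have e2 : ((k.1 : ℝ) + 1 + σ) / (1/r) = ((k.1 : ℝ) + 1 + σ) * r := by
        field_simp
      rw [e1, e2]
      constructor <;> intro h <;> linarith
    rw [hswap, Set.ncard_image_of_injective _ Prod.swap_injective]
    have hbd := main_bound τ σ lam (1/r) b (δ/8) ((δ/8)^2 + 1) hτ hσ hr1' hlam hb0 hb1
      hc₁ hc₁τ hc₂
    have e1 : (1 + (1/r) ^ 2) / (1/r) = (1 + r ^ 2) / r := by
      field_simp
      ring
    have e2 : (1 + ((1/r) ^ 2) ^ 2) / (1/r) ^ 2 = (1 + (r ^ 2) ^ 2) / r ^ 2 := by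
      field_simp
      ring
    rw [e1, e2] at hbd
    exact hbd
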